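/- arXiv:2404.01939 — 2 statements merged into one kernel-verified Lean document; each statement's English description precedes it below -/
import Mathlib

section
/- Let T be a bounded linear operator on a complex Banach space X, and suppose that for every nonempty relatively open subset U of the spectrum σ(T), the glocal spectral subspace 𝒳_T(closure(U)) is dense in X. If σ(T*) is not a singleton, then the point spectrum of the adjoint T* is empty. -/
open Set Filter Topology Bornology Complex

noncomputable section




variable {X : Type*} [NormedAddCommGroup X] [NormedSpace ℂ X]

/-- The glocal spectral subspace `𝒳_T(F)` of a bounded operator `T`. -/
def glocalSubspace (T : X →L[ℂ] X) (F : Set ℂ) : Set X :=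
  {x | ∃ f : ℂ → X, AnalyticOnNhd ℂ f Fᶜ ∧ ∀ z ∈ Fᶜ, T (f z) - z • f z = x}

/-- The local resolvent set `ρ_T(x)`. -/
def localResolventSet (T : X →L[ℂ] X) (x : X) : Set ℂ :=
  ⋃₀ {U : Set ℂ | IsOpen U ∧ ∃ f : ℂ → X, AnalyticOnNhd ℂ f U ∧ ∀ z ∈ U, T (f z) - z • f z = x}

/-- The local spectrum `σ_T(x)`. -/
def localSpectrum (T : X →L[ℂ] X) (x : X) : Set ℂ := (localResolventSet T x)ᶜ

/-- The local spectral subspace `X_T(F)`. -/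
def localSubspace (T : X →L[ℂ] X) (F : Set ℂ) : Set X := {x | localSpectrum T x ⊆ F}

/-- Dunford's property (C). -/
def HasPropertyC (T : X →L[ℂ] X) : Prop :=
  ∀ F : Set ℂ, IsClosed F → IsClosed (localSubspace T F)

/-- The single-valued extension property. -/
def HasSVEP (T : X →L[ℂ] X) : Prop :=
  ∀ U : Set ℂ, IsOpen U → ∀ f : ℂ → X, AnalyticOnNhd ℂ f U →
    (∀ z ∈ U, T (f z) - z • f z = 0) → ∀ z ∈ U, f z = 0

/-- The point spectrum of an operator. -/
def pointSpectrum (T : X →L[ℂ] X) : Set ℂ := {μ : ℂ | ∃ x : X, x ≠ 0 ∧ T x = μ • x}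

/-- The local spectral radius `r_T(x) = limsup_n ‖Tⁿx‖^(1/n)`. -/
def localSpectralRadius (T : X →L[ℂ] X) (x : X) : ℝ :=
  Filter.limsup (fun n : ℕ => ‖(T ^ n) x‖ ^ (1 / (n : ℝ))) Filter.atTop

/-- The adjoint operator `T*` acting on the dual space `X*`. -/
def dualOp (T : X →L[ℂ] X) : StrongDual ℂ X →L[ℂ] StrongDual ℂ X :=
  (ContinuousLinearMap.compL ℂ X X ℂ).flip T

/-- Restriction of an operator to an invariant subspace. -/
def restrictOp (T : X →L[ℂ] X) (M : Submodule ℂ X) (h : ∀ x ∈ M, T x ∈ M) : M →L[ℂ] M :=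
  (T.comp M.subtypeL).codRestrict M (fun x => h x.1 x.2)

/-- The full spectrum `η(K)`: the union of `K` with all the bounded connected
components of its complement. -/
def fullSpectrum (K : Set ℂ) : Set ℂ :=
  K ∪ {z : ℂ | z ∉ K ∧ Bornology.IsBounded (connectedComponentIn Kᶜ z)}

/-- `U` is a nonempty relatively open subset of `σ(T)`. -/
def RelativelyOpenInSpectrum (T : X →L[ℂ] X) (U : Set ℂ) : Prop :=
  U.Nonempty ∧ ∃ V : Set ℂ, IsOpen V ∧ U = spectrum ℂ T ∩ V


lemma spec_nonempty' {Y : Type*} [NormedAddCommGroup Y] [NormedSpace ℂ Y]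
    [CompleteSpace Y] [Nontrivial Y] (S : Y →L[ℂ] Y) : (spectrum ℂ S).Nonempty :=
  spectrum.nonempty S

set_option synthInstance.maxHeartbeats 800000 in
set_option maxHeartbeats 1600000 in
lemma dualOp_algebraMap' {X : Type*} [NormedAddCommGroup X] [NormedSpace ℂ X] (μ : ℂ) :
    dualOp (algebraMap ℂ (X →L[ℂ] X) μ) = @algebraMap ℂ (StrongDual ℂ X →L[ℂ] StrongDual ℂ X) _ ContinuousLinearMap.semiring _ μ := by
  ext φ x
  simp [dualOp, Algebra.algebraMap_eq_smul_one]

set_option synthInstance.maxHeartbeats 800000 in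
set_option maxHeartbeats 1600000 in
lemma spectrum_dualOp_subset' {X : Type*} [NormedAddCommGroup X] [NormedSpace ℂ X]
    (T : X →L[ℂ] X) : spectrum ℂ (dualOp T) ⊆ spectrum ℂ T := by
  intro lam hlam
  by_contra hl
  rw [spectrum.notMem_iff] at hl
  apply (spectrum.mem_iff.mp hlam)
  obtain ⟨u, hu⟩ := hl
  refine ⟨⟨dualOp u.val, dualOp u.inv, ?_, ?_⟩, ?_⟩
  · show dualOp u.val * dualOp u.inv = 1
    have h : dualOp (u.inv * u.val) = dualOp u.val * dualOp u.inv := rfl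
    rw [← h, u.inv_val]; rfl
  · show dualOp u.inv * dualOp u.val = 1
    have h : dualOp (u.val * u.inv) = dualOp u.inv * dualOp u.val := rfl
    rw [← h, u.val_inv]; rfl
  · show dualOp u.val = _
    rw [hu]
    have h : dualOp ((algebraMap ℂ (X →L[ℂ] X)) lam - T)
        = dualOp (algebraMap ℂ (X →L[ℂ] X) lam) - dualOp T := by simp [dualOp]
    rw [h, dualOp_algebraMap']

set_option synthInstance.maxHeartbeats 800000 in
set_option maxHeartbeats 1600000 in
lemma pointSpectrum_subset_spectrum' {X : Type*} [NormedAddCommGroup X] [NormedSpace ℂ X]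
    {S : StrongDual ℂ X →L[ℂ] StrongDual ℂ X} {μ : ℂ}
    (hμ : μ ∈ pointSpectrum S) : μ ∈ spectrum ℂ S := by
  obtain ⟨φ, hφ, hSφ⟩ := hμ
  rw [spectrum.mem_iff]
  intro hunit
  obtain ⟨u, hu⟩ := hunit
  apply hφ
  have hz : u.val φ = 0 := by
    rw [hu, ContinuousLinearMap.sub_apply, hSφ, Algebra.algebraMap_eq_smul_one,
      ContinuousLinearMap.smul_apply, ContinuousLinearMap.one_apply, sub_self]
  calc φ = (u.inv * u.val) φ := by rw [u.inv_val, ContinuousLinearMap.one_apply]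
    _ = u.inv (u.val φ) := ContinuousLinearMap.mul_apply _ _ _
    _ = 0 := by rw [hz, map_zero]

set_option synthInstance.maxHeartbeats 800000 in
set_option maxHeartbeats 1600000 in
/-- Under the density assumption on glocal spectral subspaces of `T`, if `σ(T*)` is not a
singleton then the point spectrum of the adjoint `T*` is empty. -/
theorem adjoint_pointSpectrum_empty {X : Type*} [NormedAddCommGroup X] [NormedSpace ℂ X]
    [CompleteSpace X] (T : X →L[ℂ] X)
    (hdense : ∀ U : Set ℂ, RelativelyOpenInSpectrum T U →
      Dense (glocalSubspace T (closure U)))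
    (hsing : ¬ ∃ μ : ℂ, spectrum ℂ (dualOp T) = {μ}) :
    pointSpectrum (dualOp T) = ∅ := by
  by_contra h
  obtain ⟨μ, φ, hφ, hTφ⟩ : ∃ μ : ℂ, ∃ φ : StrongDual ℂ X,
      φ ≠ 0 ∧ dualOp T φ = μ • φ := by
    rw [Set.eq_empty_iff_forall_notMem] at h
    push_neg at h
    exact h
  have hμpt : μ ∈ pointSpectrum (dualOp T) := ⟨φ, hφ, hTφ⟩
  haveI : Nontrivial (StrongDual ℂ X) := ⟨⟨φ, 0, hφ⟩⟩
  have hne : (spectrum ℂ (dualOp T)).Nonempty := spec_nonempty' _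
  obtain ⟨lam, hlam, hlamμ⟩ : ∃ lam ∈ spectrum ℂ (dualOp T), lam ≠ μ := by
    by_contra hc
    push_neg at hc
    apply hsing
    refine ⟨μ, ?_⟩
    have hsub : spectrum ℂ (dualOp T) ⊆ {μ} := fun z hz => hc z hz
    exact (hne.subset_singleton_iff.mp hsub)
  have hlamT : lam ∈ spectrum ℂ T := spectrum_dualOp_subset' T hlam
  set d : ℝ := dist lam μ with hd
  have hdpos : 0 < d := dist_pos.mpr hlamμ
  set U : Set ℂ := spectrum ℂ T ∩ Metric.ball lam (d / 2) with hU
  have hrel : RelativelyOpenInSpectrum T U :=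
    ⟨⟨lam, hlamT, Metric.mem_ball_self (by positivity)⟩,
     Metric.ball lam (d / 2), Metric.isOpen_ball, rfl⟩
  have hμc : μ ∈ (closure U)ᶜ := by
    intro hmem
    have h1 : closure U ⊆ Metric.closedBall lam (d / 2) :=
      closure_minimal (fun z hz => Metric.ball_subset_closedBall hz.2)
        Metric.isClosed_closedBall
    have h2 : dist μ lam ≤ d / 2 := h1 hmem
    rw [dist_comm] at h2
    linarith
  have hker : glocalSubspace T (closure U) ⊆ {x : X | φ x = 0} := by
    rintro x ⟨f, -, hf⟩
    have hx := hf μ hμc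
    have h1 : φ (T (f μ)) = μ * φ (f μ) := by
      have h2 : dualOp T φ (f μ) = (μ • φ) (f μ) := by rw [hTφ]
      simpa [dualOp] using h2
    show φ x = 0
    rw [← hx, map_sub, map_smul, h1, smul_eq_mul, sub_self]
  have hcl : IsClosed {x : X | φ x = 0} :=
    isClosed_eq φ.continuous continuous_const
  have hall : ∀ x : X, φ x = 0 := by
    intro x
    have h1 : closure (glocalSubspace T (closure U)) ⊆ {x : X | φ x = 0} :=
      closure_minimal hker hcl
    have h2 := (hdense U hrel).closure_eq
    rw [h2] at h1
    exact h1 (Set.mem_univ x)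
  exact hφ (ContinuousLinearMap.ext fun x => hall x)

end
end

section
/- Let T be a bounded linear operator on a complex Banach space X, and suppose that for every nonempty relatively open subset U of the spectrum σ(T), the glocal spectral subspace 𝒳_T(closure(U)) is dense in X. Then the adjoint operator T* on X* has Dunford's property (C). -/
open Set Filter Topology Bornology Complex

set_option synthInstance.maxHeartbeats 400000
set_option maxHeartbeats 1000000

noncomputable section




variable {X : Type*} [NormedAddCommGroup X] [NormedSpace ℂ X]

-- AUX START

lemma dualOp_apply (T : X →L[ℂ] X) (φ : StrongDual ℂ X) (x : X) :
    dualOp T φ x = φ (T x) := rfl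

lemma dualOp_mul (A B : X →L[ℂ] X) : dualOp (A * B) = dualOp B * dualOp A := by
  ext φ x
  rfl

lemma dualOp_one : dualOp (1 : X →L[ℂ] X) = 1 := by
  ext φ x
  rfl

lemma isUnit_dualOp {S : X →L[ℂ] X} (h : IsUnit S) : IsUnit (dualOp S) := by
  obtain ⟨u, rfl⟩ := h
  refine ⟨⟨dualOp (u : X →L[ℂ] X), dualOp (↑u⁻¹ : X →L[ℂ] X), ?_, ?_⟩, rfl⟩
  · rw [← dualOp_mul, u.inv_mul, dualOp_one]
  · rw [← dualOp_mul, u.mul_inv, dualOp_one]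

lemma dualOp_sub_smul (T : X →L[ℂ] X) (z : ℂ) :
    dualOp (z • (1 : X →L[ℂ] X) - T) = z • (1 : _) - dualOp T := by
  ext φ x
  simp [dualOp_apply, ContinuousLinearMap.sub_apply, ContinuousLinearMap.smul_apply,
    ContinuousLinearMap.one_apply, map_sub, map_smul, smul_eq_mul]

lemma eig_mem {T : X →L[ℂ] X} {μ : ℂ} {ψ : StrongDual ℂ X}
    (hψ : dualOp T ψ = μ • ψ) (hne : ψ ≠ 0) : μ ∈ spectrum ℂ T := by
  by_contra hres
  have hu : IsUnit (μ • (1 : X →L[ℂ] X) - T) := by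
    have := spectrum.notMem_iff.mp hres
    rwa [Algebra.algebraMap_eq_smul_one] at this
  apply hne
  ext y
  have h1 : ((μ • (1 : X →L[ℂ] X) - T) : X →L[ℂ] X) ((↑(hu.unit⁻¹) : X →L[ℂ] X) y) = y := by
    calc ((μ • (1 : X →L[ℂ] X) - T) : X →L[ℂ] X) ((↑(hu.unit⁻¹) : X →L[ℂ] X) y)
        = ((hu.unit : X →L[ℂ] X) * (↑(hu.unit⁻¹) : X →L[ℂ] X)) y := by
          rw [ContinuousLinearMap.mul_apply, hu.unit_spec]
      _ = y := by rw [hu.unit.mul_inv]; rfl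
  have h2 : ∀ v : X, ψ (((μ • (1 : X →L[ℂ] X) - T) : X →L[ℂ] X) v) = 0 := by
    intro v
    have : ψ (T v) = μ * ψ v := by
      have := congrArg (fun χ : StrongDual ℂ X => χ v) hψ
      simpa [dualOp_apply, smul_eq_mul] using this
    simp [ContinuousLinearMap.sub_apply, ContinuousLinearMap.smul_apply,
      ContinuousLinearMap.one_apply, map_sub, map_smul, smul_eq_mul, this]
  have := h2 ((↑(hu.unit⁻¹) : X →L[ℂ] X) y)
  rw [h1] at this
  simpa using this

lemma eig_zero [CompleteSpace X] {T : X →L[ℂ] X}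
    (hdense : ∀ U : Set ℂ, RelativelyOpenInSpectrum T U →
      Dense (glocalSubspace T (closure U)))
    {μ : ℂ} {ψ : StrongDual ℂ X} (hψ : dualOp T ψ = μ • ψ)
    {lam : ℂ} (hlam : lam ∈ spectrum ℂ T) (hne : lam ≠ μ) : ψ = 0 := by
  set r : ℝ := ‖μ - lam‖ / 2 with hr
  have hrpos : 0 < r := by
    have h0 : μ - lam ≠ 0 := sub_ne_zero.mpr (Ne.symm hne)
    have : 0 < ‖μ - lam‖ := norm_pos_iff.mpr h0
    rw [hr]; linarith
  set U : Set ℂ := spectrum ℂ T ∩ Metric.ball lam r with hU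
  have hrel : RelativelyOpenInSpectrum T U :=
    ⟨⟨lam, hlam, Metric.mem_ball_self hrpos⟩, Metric.ball lam r, Metric.isOpen_ball, rfl⟩
  have hd := hdense U hrel
  have hsub : closure U ⊆ Metric.closedBall lam r :=
    (closure_mono inter_subset_right).trans Metric.closure_ball_subset_closedBall
  have hμ : μ ∈ (closure U)ᶜ := by
    intro hmem
    have := hsub hmem
    rw [Metric.mem_closedBall, dist_eq_norm] at this
    have : ‖μ - lam‖ ≤ ‖μ - lam‖ / 2 := this
    nlinarith [hrpos]
  have hvanish : ∀ x ∈ glocalSubspace T (closure U), ψ x = 0 := by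
    rintro x ⟨f, hfa, hfe⟩
    have hx := hfe μ hμ
    have : ψ (T (f μ)) = μ * ψ (f μ) := by
      have := congrArg (fun χ : StrongDual ℂ X => χ (f μ)) hψ
      simpa [dualOp_apply, smul_eq_mul] using this
    calc ψ x = ψ (T (f μ) - μ • f μ) := by rw [hx]
      _ = ψ (T (f μ)) - μ * ψ (f μ) := by rw [map_sub, map_smul, smul_eq_mul]
      _ = 0 := by rw [this]; ring
  have : (ψ : X → ℂ) = (0 : StrongDual ℂ X) := by
    apply Continuous.ext_on hd ψ.continuous continuous_zero
    intro x hx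
    exact hvanish x hx
  ext y
  exact congrFun this y

lemma svep_dual [CompleteSpace X] {T : X →L[ℂ] X}
    (hdense : ∀ U : Set ℂ, RelativelyOpenInSpectrum T U →
      Dense (glocalSubspace T (closure U))) :
    HasSVEP (dualOp T) := by
  intro U hU gf hgf heq z₀ hz₀
  by_contra hne
  have hc : ContinuousAt gf z₀ := (hgf z₀ hz₀).continuousAt
  have hev : ∀ᶠ w in 𝓝 z₀, gf w ≠ 0 ∧ w ∈ U :=
    (hc.eventually_ne hne).and (hU.mem_nhds hz₀)
  obtain ⟨ε, hεpos, hball⟩ := Metric.eventually_nhds_iff_ball.mp hev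
  set μ : ℂ := z₀ + (ε / 2 : ℝ) with hμdef
  have hμball : μ ∈ Metric.ball z₀ ε := by
    rw [Metric.mem_ball, dist_eq_norm, hμdef]
    simp only [add_sub_cancel_left]
    rw [Complex.norm_real, Real.norm_eq_abs, abs_of_pos (by positivity)]
    linarith
  obtain ⟨hμne, hμU⟩ := hball μ hμball
  have hμz₀ : μ ≠ z₀ := by
    rw [hμdef]
    intro h
    have : ((ε / 2 : ℝ) : ℂ) = 0 := by linear_combination h
    have : (ε / 2 : ℝ) = 0 := by exact_mod_cast this
    linarith
  have heigμ : dualOp T (gf μ) = μ • gf μ := by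
    have := heq μ hμU
    linear_combination (norm := module) this
  have hμspec : μ ∈ spectrum ℂ T := eig_mem heigμ hμne
  have heigz : dualOp T (gf z₀) = z₀ • gf z₀ := by
    have := heq z₀ hz₀
    linear_combination (norm := module) this
  exact hne (eig_zero hdense heigz hμspec hμz₀)

lemma glue {Y : Type*} [NormedAddCommGroup Y] [NormedSpace ℂ Y]
    (S : Y →L[ℂ] Y) (hsvep : HasSVEP S) (φ : Y) :
    ∃ g : ℂ → Y, AnalyticOnNhd ℂ g (localResolventSet S φ) ∧
      ∀ z ∈ localResolventSet S φ, S (g z) - z • g z = φ := by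
  have key : ∀ z ∈ localResolventSet S φ, ∃ p : Set ℂ × (ℂ → Y),
      z ∈ p.1 ∧ IsOpen p.1 ∧ p.1 ⊆ localResolventSet S φ ∧
      AnalyticOnNhd ℂ p.2 p.1 ∧ ∀ w ∈ p.1, S (p.2 w) - w • p.2 w = φ := by
    intro z hz
    obtain ⟨U, ⟨hUopen, f, hfa, hfe⟩, hzU⟩ := hz
    exact ⟨(U, f), hzU, hUopen, fun w hw => ⟨U, ⟨hUopen, f, hfa, hfe⟩, hw⟩, hfa, hfe⟩
  choose! p hmem hopen hsub hana heqn using key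
  classical
  set g : ℂ → Y := fun z =>
    if hz : z ∈ localResolventSet S φ then (p z).2 z else 0 with hg
  have cons : ∀ z ∈ localResolventSet S φ, ∀ w ∈ (p z).1, (p w).2 w = (p z).2 w := by
    intro z hz w hw
    have hwρ : w ∈ localResolventSet S φ := hsub z hz hw
    have hV : IsOpen ((p w).1 ∩ (p z).1) := (hopen w hwρ).inter (hopen z hz)
    have hwV : w ∈ (p w).1 ∩ (p z).1 := ⟨hmem w hwρ, hw⟩
    have hda : AnalyticOnNhd ℂ (fun v => (p w).2 v - (p z).2 v) ((p w).1 ∩ (p z).1) :=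
      ((hana w hwρ).mono inter_subset_left).sub ((hana z hz).mono inter_subset_right)
    have hde : ∀ v ∈ (p w).1 ∩ (p z).1,
        S ((p w).2 v - (p z).2 v) - v • ((p w).2 v - (p z).2 v) = 0 := by
      intro v hv
      have e1 := heqn w hwρ v hv.1
      have e2 := heqn z hz v hv.2
      rw [map_sub, smul_sub]
      linear_combination (norm := module) e1 - e2
    have := hsvep _ hV _ hda hde w hwV
    linear_combination (norm := module) this
  have hgev : ∀ z ∈ localResolventSet S φ, ∀ w ∈ (p z).1, g w = (p z).2 w := by
    intro z hz w hw
    have hwρ : w ∈ localResolventSet S φ := hsub z hz hw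
    rw [hg]
    simp only [dif_pos hwρ]
    exact cons z hz w hw
  refine ⟨g, ?_, ?_⟩
  · intro z hz
    have : (fun w => (p z).2 w) =ᶠ[𝓝 z] g := by
      filter_upwards [(hopen z hz).mem_nhds (hmem z hz)] with w hw
      exact (hgev z hz w hw).symm
    exact (hana z hz z (hmem z hz)).congr this
  · intro z hz
    have := hgev z hz z (hmem z hz)
    rw [this]
    exact heqn z hz z (hmem z hz)

lemma pairing [CompleteSpace X] {T : X →L[ℂ] X} {φ : StrongDual ℂ X} {x : X}
    {F G : Set ℂ} (hF : IsClosed F) (hG : IsClosed G) (hGb : IsBounded G)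
    (hdisj : ∀ z ∈ G, z ∉ F)
    (hx : x ∈ glocalSubspace T G)
    (hsvep : HasSVEP (dualOp T))
    (hφ : Fᶜ ⊆ localResolventSet (dualOp T) φ) : φ x = 0 := by
  obtain ⟨f, hfa, hfe⟩ := hx
  obtain ⟨g, hga, hge⟩ := glue (dualOp T) hsvep φ
  classical
  set h : ℂ → ℂ := fun z => if z ∈ F then φ (f z) else (g z) x with hh
  -- overlap identity
  have overlap : ∀ z, z ∉ F → z ∉ G → (g z) x = φ (f z) := by
    intro z hzF hzG
    have h1 : T (f z) - z • f z = x := hfe z hzG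
    have h2 : dualOp T (g z) - z • g z = φ := hge z (hφ hzF)
    have h2' := congrArg (fun χ : StrongDual ℂ X => χ (f z)) h2
    simp only [ContinuousLinearMap.sub_apply, ContinuousLinearMap.smul_apply,
      dualOp_apply, smul_eq_mul] at h2'
    calc (g z) x = (g z) (T (f z) - z • f z) := by rw [h1]
      _ = (g z) (T (f z)) - z * (g z) (f z) := by rw [map_sub, map_smul, smul_eq_mul]
      _ = φ (f z) := h2'
  -- differentiability
  have hdiff : Differentiable ℂ h := by
    intro z
    by_cases hz : z ∈ F
    · have hzG : z ∉ G := fun hm => hdisj z hm hz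
      have base : DifferentiableAt ℂ (fun w => φ (f w)) z :=
        (differentiableAt_const φ).clm_apply (hfa z hzG).differentiableAt
      apply base.congr_of_eventuallyEq
      filter_upwards [hG.isOpen_compl.mem_nhds hzG] with w hw
      by_cases hwF : w ∈ F
      · simp [hh, hwF]
      · rw [hh]; simp only [if_neg hwF]; exact (overlap w hwF hw).symm ▸ rfl
    · have base : DifferentiableAt ℂ (fun w => (g w) x) z :=
        ((hga z (hφ hz)).differentiableAt).clm_apply (differentiableAt_const x)
      apply base.congr_of_eventuallyEq
      filter_upwards [hF.isOpen_compl.mem_nhds hz] with w hw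
      rw [hh]; simp only [if_neg hw]
  -- behaviour at infinity
  set Rz : ℂ → (X →L[ℂ] X) := fun z => Ring.inverse ((1 : X →L[ℂ] X) - z⁻¹ • T) with hRz
  have key : ∀ z : ℂ, ‖T‖ < ‖z‖ → z ∉ G →
      h z = φ (f z) ∧ f z = -(z⁻¹ • (Rz z) x) := by
    intro z hz hzG
    have hz0 : z ≠ 0 := by
      intro h0; rw [h0, norm_zero] at hz; exact absurd hz (not_lt.mpr (norm_nonneg T))
    have hznorm : (0:ℝ) < ‖z‖ := lt_of_le_of_lt (norm_nonneg T) hz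
    have hnorm : ‖z⁻¹ • T‖ < 1 := by
      rw [norm_smul z⁻¹ T, norm_inv]
      calc ‖z‖⁻¹ * ‖T‖ < ‖z‖⁻¹ * ‖z‖ := by
            apply mul_lt_mul_of_pos_left hz (inv_pos.mpr hznorm)
        _ = 1 := inv_mul_cancel₀ (ne_of_gt hznorm)
    set u : (X →L[ℂ] X)ˣ := Units.oneSub (z⁻¹ • T) hnorm with hu
    have huval : (u : X →L[ℂ] X) = 1 - z⁻¹ • T := rfl
    set w : (X →L[ℂ] X)ˣ :=
      ⟨z • (u : X →L[ℂ] X), z⁻¹ • ((u⁻¹ : (X →L[ℂ] X)ˣ) : X →L[ℂ] X),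
        by rw [smul_mul_smul_comm, mul_inv_cancel₀ hz0, u.mul_inv, one_smul],
        by rw [smul_mul_smul_comm, inv_mul_cancel₀ hz0, u.inv_mul, one_smul]⟩ with hw
    have hwval : (w : X →L[ℂ] X) = z • (1 : X →L[ℂ] X) - T := by
      show z • (u : X →L[ℂ] X) = _
      rw [huval, smul_sub, smul_smul, mul_inv_cancel₀ hz0, one_smul]
    have hwinv : ((w⁻¹ : (X →L[ℂ] X)ˣ) : X →L[ℂ] X)
        = z⁻¹ • ((u⁻¹ : (X →L[ℂ] X)ˣ) : X →L[ℂ] X) := rfl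
    have hRzu : Rz z = ((u⁻¹ : (X →L[ℂ] X)ˣ) : X →L[ℂ] X) := by
      rw [hRz]
      exact NormedRing.inverse_one_sub _ hnorm
    have hfeq := hfe z hzG
    have hstep : (w : X →L[ℂ] X) (f z) = -x := by
      rw [hwval]
      simp only [ContinuousLinearMap.sub_apply, ContinuousLinearMap.smul_apply,
        ContinuousLinearMap.one_apply]
      linear_combination (norm := module) - hfeq
    have hfz : f z = ((w⁻¹ : (X →L[ℂ] X)ˣ) : X →L[ℂ] X) (-x) := by
      have : ((w⁻¹ : (X →L[ℂ] X)ˣ) : X →L[ℂ] X) ((w : X →L[ℂ] X) (f z))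
          = f z := by
        rw [← ContinuousLinearMap.mul_apply, w.inv_mul, ContinuousLinearMap.one_apply]
      rw [← this, hstep]
    constructor
    · by_cases hzF : z ∈ F
      · rw [hh]; simp [hzF]
      · rw [hh]; simp only [if_neg hzF]; exact overlap z hzF hzG
    · rw [hfz, hwinv, hRzu]
      simp [map_neg, smul_neg]
  have ev1 : ∀ᶠ z : ℂ in cobounded ℂ, ‖T‖ < ‖z‖ :=
    tendsto_norm_cobounded_atTop.eventually_gt_atTop ‖T‖
  have ev2 : ∀ᶠ z : ℂ in cobounded ℂ, z ∉ G := by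
    have : Gᶜ ∈ cobounded ℂ := isBounded_def.mp hGb
    exact eventually_iff.mpr this
  -- tendsto of Rz
  have tendR : Tendsto Rz (cobounded ℂ) (𝓝 1) := by
    have inner : Tendsto (fun z : ℂ => (1 : X →L[ℂ] X) - z⁻¹ • T) (cobounded ℂ)
        (𝓝 ((1 : X →L[ℂ] X) - (0:ℂ) • T)) :=
      tendsto_const_nhds.sub (tendsto_inv₀_cobounded.smul_const T)
    rw [zero_smul, sub_zero] at inner
    have hcont : ContinuousAt (Ring.inverse : (X →L[ℂ] X) → (X →L[ℂ] X))
        ((1 : (X →L[ℂ] X)ˣ) : X →L[ℂ] X) := NormedRing.inverse_continuousAt 1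
    rw [Units.val_one] at hcont
    have := hcont.tendsto.comp inner
    rwa [Ring.inverse_one] at this
  have tendfx : Tendsto (fun z : ℂ => -(z⁻¹ • (Rz z) x)) (cobounded ℂ) (𝓝 0) := by
    have happ : Tendsto (fun z : ℂ => (Rz z) x) (cobounded ℂ)
        (𝓝 ((1 : X →L[ℂ] X) x)) :=
      ((ContinuousLinearMap.apply ℂ X x).continuous.tendsto _).comp tendR
    have := (tendsto_inv₀_cobounded (α := ℂ)).smul happ
    rw [zero_smul] at this
    simpa using this.neg
  have htends : Tendsto h (cobounded ℂ) (𝓝 0) := by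
    have base : Tendsto (fun z : ℂ => φ (-(z⁻¹ • (Rz z) x))) (cobounded ℂ) (𝓝 0) := by
      have := (φ.continuous.tendsto _).comp tendfx
      rwa [map_zero] at this
    apply base.congr'
    filter_upwards [ev1, ev2] with z h1 h2
    obtain ⟨hz1, hz2⟩ := key z h1 h2
    rw [hz1, hz2]
  have hzero : ∀ z, h z = 0 := by
    intro z
    apply hdiff.apply_eq_of_tendsto_cocompact
    rwa [← Metric.cobounded_eq_cocompact]
  -- conclusion
  have ev3 : ∀ᶠ z : ℂ in cobounded ℂ, φ x = φ (T (f z)) := by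
    filter_upwards [ev1, ev2] with z h1 h2
    obtain ⟨hz1, _⟩ := key z h1 h2
    have hfeq := hfe z h2
    have hφf : φ (f z) = 0 := by rw [← hz1]; exact hzero z
    calc φ x = φ (T (f z) - z • f z) := by rw [hfeq]
      _ = φ (T (f z)) - z * φ (f z) := by rw [map_sub, map_smul, smul_eq_mul]
      _ = φ (T (f z)) := by rw [hφf]; ring
  have tendTf : Tendsto (fun z : ℂ => φ (T (f z))) (cobounded ℂ) (𝓝 0) := by
    have base : Tendsto (fun z : ℂ => φ (T (-(z⁻¹ • (Rz z) x)))) (cobounded ℂ)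
        (𝓝 (φ (T 0))) := ((φ.continuous.comp T.continuous).tendsto _).comp tendfx
    rw [map_zero, map_zero] at base
    apply base.congr'
    filter_upwards [ev1, ev2] with z h1 h2
    rw [(key z h1 h2).2]
  have : Tendsto (fun _ : ℂ => φ x) (cobounded ℂ) (𝓝 0) := by
    apply tendTf.congr'
    filter_upwards [ev3] with z hz
    exact hz.symm
  exact tendsto_nhds_unique tendsto_const_nhds this

lemma resolvent_subset_localResolvent {Y : Type*} [NormedAddCommGroup Y] [NormedSpace ℂ Y]
    [CompleteSpace Y] (S : Y →L[ℂ] Y) (φ : Y) :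
    resolventSet ℂ S ⊆ localResolventSet S φ := by
  intro z hz
  refine ⟨resolventSet ℂ S, ⟨spectrum.isOpen_resolventSet S,
    fun w => -((resolvent S w) φ), ?_, ?_⟩, hz⟩
  · have hdOn : DifferentiableOn ℂ (fun w => -((resolvent S w) φ)) (resolventSet ℂ S) :=
      fun w hw => (((spectrum.hasDerivAt_resolvent hw).differentiableAt).clm_apply
        (differentiableAt_const φ)).neg.differentiableWithinAt
    exact hdOn.analyticOnNhd (spectrum.isOpen_resolventSet S)
  · intro w hw
    have hwu : IsUnit (algebraMap ℂ (Y →L[ℂ] Y) w - S) := hw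
    have h0 : ((algebraMap ℂ (Y →L[ℂ] Y)) w - S) ((↑hwu.unit⁻¹ : Y →L[ℂ] Y) φ) = φ := by
      calc ((algebraMap ℂ (Y →L[ℂ] Y)) w - S) ((↑hwu.unit⁻¹ : Y →L[ℂ] Y) φ)
          = ((hwu.unit : Y →L[ℂ] Y) * (↑hwu.unit⁻¹ : Y →L[ℂ] Y)) φ := by
            rw [ContinuousLinearMap.mul_apply, hwu.unit_spec]
        _ = φ := by rw [hwu.unit.mul_inv, ContinuousLinearMap.one_apply]
    have h1 : ((algebraMap ℂ (Y →L[ℂ] Y) w - S)) ((resolvent S w) φ) = φ := by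
      rw [spectrum.resolvent_eq hw]
      exact h0
    rw [Algebra.algebraMap_eq_smul_one] at h1
    simp only [ContinuousLinearMap.sub_apply, ContinuousLinearMap.smul_apply,
      ContinuousLinearMap.one_apply] at h1
    rw [map_neg, smul_neg]
    linear_combination (norm := module) h1

lemma resolvent_dual [CompleteSpace X] {T : X →L[ℂ] X} {z : ℂ}
    (hz : z ∈ resolventSet ℂ T) :
    z ∈ resolventSet ℂ (dualOp T) := by
  have hu : IsUnit (algebraMap ℂ (X →L[ℂ] X) z - T) := hz
  rw [Algebra.algebraMap_eq_smul_one] at hu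
  have := isUnit_dualOp hu
  rw [dualOp_sub_smul] at this
  show IsUnit _
  rwa [Algebra.algebraMap_eq_smul_one]

theorem adjoint_hasPropertyC' {X : Type*} [NormedAddCommGroup X] [NormedSpace ℂ X]
    [CompleteSpace X] (T : X →L[ℂ] X)
    (hdense : ∀ U : Set ℂ, RelativelyOpenInSpectrum T U →
      Dense (glocalSubspace T (closure U))) :
    HasPropertyC (dualOp T) := by
  intro F hF
  by_cases hσ : spectrum ℂ T ⊆ F
  · have huniv : localSubspace (dualOp T) F = univ := by
      apply eq_univ_of_forall
      intro φ
      show localSpectrum (dualOp T) φ ⊆ F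
      intro z hz
      by_contra hzF
      have hzT : z ∈ resolventSet ℂ T :=
        spectrum.notMem_iff.mp (fun hm => hzF (hσ hm))
      exact hz (resolvent_subset_localResolvent (dualOp T) φ (resolvent_dual hzT))
    rw [huniv]
    exact isClosed_univ
  · obtain ⟨lam, hlamσ, hlamF⟩ := Set.not_subset.mp hσ
    have hsvep := svep_dual hdense
    have hnF : Fᶜ ∈ 𝓝 lam := hF.isOpen_compl.mem_nhds hlamF
    obtain ⟨ε, hεpos, hball⟩ := Metric.mem_nhds_iff.mp hnF
    set U : Set ℂ := spectrum ℂ T ∩ Metric.ball lam (ε / 2) with hUdef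
    set G : Set ℂ := closure U with hGdef
    have hGsub : G ⊆ Metric.closedBall lam (ε / 2) :=
      (closure_mono inter_subset_right).trans Metric.closure_ball_subset_closedBall
    have hGF : ∀ z ∈ G, z ∉ F := by
      intro z hzG
      have : z ∈ Metric.ball lam ε :=
        Metric.closedBall_subset_ball (by linarith) (hGsub hzG)
      exact fun hzF => hball this hzF
    have hrel : RelativelyOpenInSpectrum T U :=
      ⟨⟨lam, hlamσ, Metric.mem_ball_self (by linarith)⟩,
        Metric.ball lam (ε / 2), Metric.isOpen_ball, rfl⟩
    have hdd := hdense U hrel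
    have hsingle : localSubspace (dualOp T) F = {0} := by
      ext φ
      simp only [mem_singleton_iff]
      constructor
      · intro hφ
        have hφ' : Fᶜ ⊆ localResolventSet (dualOp T) φ := compl_subset_comm.mp hφ
        have hvan : ∀ x ∈ glocalSubspace T G, φ x = 0 := by
          intro x hx
          exact pairing hF isClosed_closure
            (Metric.isBounded_closedBall.subset hGsub) hGF hx hsvep hφ'
        have : (φ : X → ℂ) = (0 : StrongDual ℂ X) := by
          apply Continuous.ext_on hdd φ.continuous continuous_zero
          intro x hx
          exact hvan x hx
        ext y
        exact congrFun this y
      · rintro rfl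
        show localSpectrum (dualOp T) 0 ⊆ F
        intro z hz
        exact absurd (⟨univ, ⟨isOpen_univ, fun _ => 0, analyticOnNhd_const,
          by intro w _; simp⟩, mem_univ z⟩ : z ∈ localResolventSet (dualOp T) 0) hz
    rw [hsingle]
    exact isClosed_singleton

/-- Under the density assumption on glocal spectral subspaces of `T`, the adjoint `T*`
has Dunford's property (C). -/
theorem adjoint_hasPropertyC {X : Type*} [NormedAddCommGroup X] [NormedSpace ℂ X]
    [CompleteSpace X] (T : X →L[ℂ] X)
    (hdense : ∀ U : Set ℂ, RelativelyOpenInSpectrum T U →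
      Dense (glocalSubspace T (closure U))) :
    HasPropertyC (dualOp T) :=
  adjoint_hasPropertyC' T hdense

end
end
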